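/- The one-relator group ⟨x, y, z | x y z y z z x x y z y z = 1⟩ is isomorphic to the free group of rank 2. -/

import Mathlib

/-- The relator x y z y z z x x y z y z over generators indexed by `Fin 3`
(0 ↦ x, 1 ↦ y, 2 ↦ z). -/
def ohareUnitRels : Set (FreeGroup (Fin 3)) :=
  {FreeGroup.of 0 * FreeGroup.of 1 * FreeGroup.of 2 * FreeGroup.of 1 * FreeGroup.of 2 *
    FreeGroup.of 2 * FreeGroup.of 0 * FreeGroup.of 0 * FreeGroup.of 1 * FreeGroup.of 2 *
    FreeGroup.of 1 * FreeGroup.of 2}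

private lemma ohare_aux_y {G : Type*} [Group G] (x y z : G)
    (h : x*y*z*y*z*z*x*x*y*z*y*z = 1) :
    (y*z)*x*x*(y*z)*(y*z)*x*(y*z)*(y*z) = y := by
  have e : (y*z)*x*x*(y*z)*(y*z)*x*(y*z)*(y*z)
      = y * ((x*y*z*y*z)⁻¹ * (x*y*z*y*z*z*x*x*y*z*y*z) * (x*y*z*y*z)) := by
    group
  rw [e, h]; group

private lemma ohare_aux_z {G : Type*} [Group G] (x y z : G)
    (h : x*y*z*y*z*z*x*x*y*z*y*z = 1) :
    (y*z)⁻¹*(y*z)⁻¹*x⁻¹*(y*z)⁻¹*(y*z)⁻¹*x⁻¹*x⁻¹ = z := by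
  have e : (y*z)⁻¹*(y*z)⁻¹*x⁻¹*(y*z)⁻¹*(y*z)⁻¹*x⁻¹*x⁻¹
      = ((x*y*z*y*z)⁻¹ * (x*y*z*y*z*z*x*x*y*z*y*z)⁻¹ * (x*y*z*y*z)) * z := by
    group
  rw [e, h]; group

/-- The one-relator group ⟨x, y, z | xyzyzzxxyzyz = 1⟩ is isomorphic
to the free group of rank 2. -/
theorem ohare_units_free_of_rank_two :
    Nonempty (PresentedGroup ohareUnitRels ≃* FreeGroup (Fin 2)) := by
  set a : FreeGroup (Fin 2) := FreeGroup.of 0 with ha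
  set b : FreeGroup (Fin 2) := FreeGroup.of 1 with hb
  -- forward map data
  set F : Fin 3 → FreeGroup (Fin 2) :=
    ![a, b*a*a*b*b*a*b*b, b⁻¹*b⁻¹*a⁻¹*b⁻¹*b⁻¹*a⁻¹*a⁻¹] with hF
  have hrels : ∀ r ∈ ohareUnitRels, FreeGroup.lift F r = 1 := by
    intro r hr
    have hr' : r = FreeGroup.of 0 * FreeGroup.of 1 * FreeGroup.of 2 * FreeGroup.of 1 *
        FreeGroup.of 2 * FreeGroup.of 2 * FreeGroup.of 0 * FreeGroup.of 0 * FreeGroup.of 1 *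
        FreeGroup.of 2 * FreeGroup.of 1 * FreeGroup.of 2 := hr
    subst hr'
    simp only [map_mul, FreeGroup.lift_apply_of, hF]
    simp only [Matrix.cons_val_zero, Matrix.cons_val_one, Matrix.head_cons, Matrix.cons_val_two,
      Matrix.tail_cons]
    group
  set φ : PresentedGroup ohareUnitRels →* FreeGroup (Fin 2) := PresentedGroup.toGroup hrels with hφ
  set x : PresentedGroup ohareUnitRels := PresentedGroup.of 0 with hx
  set y : PresentedGroup ohareUnitRels := PresentedGroup.of 1 with hy
  set z : PresentedGroup ohareUnitRels := PresentedGroup.of 2 with hz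
  set ψ : FreeGroup (Fin 2) →* PresentedGroup ohareUnitRels :=
    FreeGroup.lift ![x, y * z] with hψ
  -- the relation holds in the presented group
  have hrel : x*y*z*y*z*z*x*x*y*z*y*z = 1 := by
    have hm : (FreeGroup.of 0 * FreeGroup.of 1 * FreeGroup.of 2 * FreeGroup.of 1 *
        FreeGroup.of 2 * FreeGroup.of 2 * FreeGroup.of 0 * FreeGroup.of 0 * FreeGroup.of 1 *
        FreeGroup.of 2 * FreeGroup.of 1 * FreeGroup.of 2) ∈
        Subgroup.normalClosure ohareUnitRels :=
      Subgroup.subset_normalClosure rfl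
    exact (QuotientGroup.eq_one_iff _).mpr hm
  refine ⟨MonoidHom.toMulEquiv φ ψ ?_ ?_⟩
  · -- ψ ∘ φ = id
    apply PresentedGroup.ext
    intro i
    fin_cases i
    · simp only [MonoidHom.comp_apply, MonoidHom.id_apply, hφ, PresentedGroup.toGroup.of, hF]
      simp [hψ, ha, hx]
    · simp only [MonoidHom.comp_apply, MonoidHom.id_apply, hφ, PresentedGroup.toGroup.of, hF]
      simp only [Matrix.cons_val_one, Matrix.head_cons, map_mul, hψ, FreeGroup.lift_apply_of, ha, hb,
        Matrix.cons_val_zero]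
      show (y*z)*x*x*(y*z)*(y*z)*x*(y*z)*(y*z) = y
      exact ohare_aux_y x y z hrel
    · simp only [MonoidHom.comp_apply, MonoidHom.id_apply, hφ, PresentedGroup.toGroup.of, hF]
      simp only [Matrix.cons_val_two, Matrix.tail_cons, Matrix.head_cons, map_mul, map_inv,
        hψ, FreeGroup.lift_apply_of, ha, hb, Matrix.cons_val_zero, Matrix.cons_val_one]
      show (y*z)⁻¹*(y*z)⁻¹*x⁻¹*(y*z)⁻¹*(y*z)⁻¹*x⁻¹*x⁻¹ = z
      exact ohare_aux_z x y z hrel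
  · -- φ ∘ ψ = id
    apply FreeGroup.ext_hom
    intro i
    fin_cases i
    · simp [hψ, hφ, PresentedGroup.toGroup.of, hF, hx, ha, Fin.mk_zero, Fin.mk_one]
    · simp only [MonoidHom.comp_apply, MonoidHom.id_apply, hψ, FreeGroup.lift_apply_of,
        Fin.mk_zero, Fin.mk_one]
      simp only [Matrix.cons_val_one, Matrix.head_cons, Matrix.cons_val_zero, map_mul, hφ,
        PresentedGroup.toGroup.of, hy, hz, hF, Matrix.cons_val_one, Matrix.cons_val_two,
        Matrix.tail_cons, Matrix.head_cons, ha, hb]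
      group
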